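/- Let l ≠ 5 be an odd prime, p a prime, and b₁, b₂ squarefree integers whose only prime divisors lie in {2,3,5,p}xxx (elements of Q(S,2)). Suppose (z₁,z₂,z₃) ∈ Q_l × Q_l × Q_l satisfies b₁z₁² − b₂z₂² = 15p and b₁z₁² − b₁b₂z₃² = 24p, with z₁,z₂ nonzero. If v_l(z_i) < 0 for some i ∈ {1,2,3}, then v_l(z₁) = v_l(z₂) = v_l(z₃) = −k for some positive integer k. -/

import Mathlib

section aux
variable {l : ℕ} [hl : Fact l.Prime]

lemma my_val_neg (x : ℚ_[l]) : (-x).valuation = x.valuation := by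
  rcases eq_or_ne x 0 with rfl | hx
  · simp
  · have h1 : ((-1 : ℤ) : ℚ_[l]) ≠ 0 := by
      exact_mod_cast (by norm_num : ((-1 : ℤ)) ≠ 0)
    have h2 := Padic.valuation_mul (p := l) h1 hx
    have hv1 : (((-1 : ℤ) : ℚ_[l])).valuation = 0 := by
      rw [Padic.valuation_intCast]; simp [padicValInt]
    rw [hv1, zero_add] at h2
    simpa using h2

lemma my_val_add (x y : ℚ_[l]) (hx : x ≠ 0) (h : x.valuation < y.valuation) :
    (x + y).valuation = x.valuation := by
  rcases eq_or_ne y 0 with rfl | hy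
  · simp
  have hxy : x + y ≠ 0 := by
    intro h0
    have hyx : y = -x := eq_neg_of_add_eq_zero_right h0
    rw [hyx, my_val_neg] at h; exact lt_irrefl _ h
  have h1 : min x.valuation y.valuation ≤ (x + y).valuation := Padic.le_valuation_add hxy
  rw [min_eq_left h.le] at h1
  by_contra hne
  have h2 : x.valuation < (x + y).valuation := lt_of_le_of_ne h1 (Ne.symm hne)
  have h3 : min (x + y).valuation (-y).valuation ≤ ((x + y) + (-y)).valuation :=
    Padic.le_valuation_add (by simpa using hx)
  rw [add_neg_cancel_right, my_val_neg] at h3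
  exact absurd h3 (not_le.mpr (lt_min h2 h))

lemma sqf_padicValInt {b : ℤ} (hb : Squarefree b) : padicValInt l b ≤ 1 := by
  have hsf : Squarefree b.natAbs := Int.squarefree_natAbs.mpr hb
  have h := hsf.natFactorization_le_one l
  rw [Nat.factorization_def _ hl.out] at h
  simpa [padicValInt] using h

lemma dvd_of_one_le_padicValInt {b : ℤ} (hb : b ≠ 0) (h : 1 ≤ padicValInt l b) :
    (l : ℤ) ∣ b := by
  have h1 : l ∣ b.natAbs := by
    refine (Nat.Prime.dvd_iff_one_le_factorization hl.out (Int.natAbs_ne_zero.mpr hb)).mpr ?_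
    rw [Nat.factorization_def _ hl.out]
    simpa [padicValInt] using h
  exact Int.dvd_natAbs.mp (Int.natCast_dvd_natCast.mpr h1)

end aux

/-- Valuation lemma: for an odd prime `l ≠ 5`, squarefree `b₁, b₂` supported on
`{2,3,5,p}`, if `(z₁,z₂,z₃)` solves the homogeneous-space equations and some `z_i` has
negative `l`-adic valuation, then all three valuations are equal to some `−k < 0`. -/
theorem stmt5 (l p : ℕ) [Fact l.Prime] (hlodd : Odd l) (hl5 : l ≠ 5) (hp : p.Prime)
    (b₁ b₂ : ℤ) (hb₁sf : Squarefree b₁) (hb₂sf : Squarefree b₂)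
    (hb₁S : ∀ q : ℕ, q.Prime → (q : ℤ) ∣ b₁ → q ∈ ({2, 3, 5, p} : Set ℕ))
    (hb₂S : ∀ q : ℕ, q.Prime → (q : ℤ) ∣ b₂ → q ∈ ({2, 3, 5, p} : Set ℕ))
    (z₁ z₂ z₃ : ℚ_[l]) (hz₁ : z₁ ≠ 0) (hz₂ : z₂ ≠ 0)
    (e₁ : (b₁ : ℚ_[l]) * z₁ ^ 2 - (b₂ : ℚ_[l]) * z₂ ^ 2 = 15 * p)
    (e₂ : (b₁ : ℚ_[l]) * z₁ ^ 2 - (b₁ : ℚ_[l]) * (b₂ : ℚ_[l]) * z₃ ^ 2 = 24 * p)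
    (hneg : z₁.valuation < 0 ∨ z₂.valuation < 0 ∨ z₃.valuation < 0) :
    ∃ k : ℤ, 0 < k ∧ z₁.valuation = -k ∧ z₂.valuation = -k ∧ z₃.valuation = -k := by
  have hlp : l.Prime := Fact.out
  have hb₁0 : b₁ ≠ 0 := hb₁sf.ne_zero
  have hb₂0 : b₂ ≠ 0 := hb₂sf.ne_zero
  have hb₁c : ((b₁ : ℤ) : ℚ_[l]) ≠ 0 := Int.cast_ne_zero.mpr hb₁0
  have hb₂c : ((b₂ : ℤ) : ℚ_[l]) ≠ 0 := Int.cast_ne_zero.mpr hb₂0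
  have hz₁2 : z₁ ^ 2 ≠ 0 := pow_ne_zero 2 hz₁
  have hz₂2 : z₂ ^ 2 ≠ 0 := pow_ne_zero 2 hz₂
  -- valuations of the b's
  have hvb₁ : ((b₁ : ℚ_[l])).valuation = (padicValInt l b₁ : ℤ) := Padic.valuation_intCast b₁
  have hvb₂ : ((b₂ : ℚ_[l])).valuation = (padicValInt l b₂ : ℤ) := Padic.valuation_intCast b₂
  have hpb₁ : (padicValInt l b₁ : ℤ) ≤ 1 := by exact_mod_cast sqf_padicValInt hb₁sf
  have hpb₂ : (padicValInt l b₂ : ℤ) ≤ 1 := by exact_mod_cast sqf_padicValInt hb₂sf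
  have hpb₁0 : (0 : ℤ) ≤ (padicValInt l b₁ : ℤ) := Int.natCast_nonneg _
  have hpb₂0 : (0 : ℤ) ≤ (padicValInt l b₂ : ℤ) := Int.natCast_nonneg _
  -- valuations of squares
  have hsq : ∀ z : ℚ_[l], z ≠ 0 → (z ^ 2).valuation = 2 * z.valuation := by
    intro z hz
    rw [sq, Padic.valuation_mul hz hz]; ring
  -- valuation of A
  have hA0 : (b₁ : ℚ_[l]) * z₁ ^ 2 ≠ 0 := mul_ne_zero hb₁c hz₁2
  have hvA : ((b₁ : ℚ_[l]) * z₁ ^ 2).valuation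
      = (padicValInt l b₁ : ℤ) + 2 * z₁.valuation := by
    rw [Padic.valuation_mul hb₁c hz₁2, hvb₁, hsq z₁ hz₁]
  -- the right-hand sides
  have h15cast : (15 : ℚ_[l]) * p = ((15 * p : ℕ) : ℚ_[l]) := by push_cast; ring
  have h24cast : (24 : ℚ_[l]) * p = ((24 * p : ℕ) : ℚ_[l]) := by push_cast; ring
  have h15 : 0 ≤ ((15 : ℚ_[l]) * p).valuation := by
    rw [h15cast, Padic.valuation_natCast]; positivity
  have h24 : 0 ≤ ((24 : ℚ_[l]) * p).valuation := by
    rw [h24cast, Padic.valuation_natCast]; positivity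
  rcases lt_or_ge z₁.valuation 0 with hneg1 | hge1
  · -- main case : v(z₁) < 0
    have hAneg : ((b₁ : ℚ_[l]) * z₁ ^ 2).valuation < 0 := by rw [hvA]; omega
    -- B = A - 15p
    have hBeq : (b₂ : ℚ_[l]) * z₂ ^ 2 = (b₁ : ℚ_[l]) * z₁ ^ 2 + (-((15 : ℚ_[l]) * p)) := by
      linear_combination -e₁
    have hvB : ((b₂ : ℚ_[l]) * z₂ ^ 2).valuation = ((b₁ : ℚ_[l]) * z₁ ^ 2).valuation := by
      rw [hBeq, my_val_add _ _ hA0 (by rw [my_val_neg]; exact lt_of_lt_of_le hAneg h15)]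
    -- C = A - 24p
    have hCeq : (b₁ : ℚ_[l]) * (b₂ : ℚ_[l]) * z₃ ^ 2
        = (b₁ : ℚ_[l]) * z₁ ^ 2 + (-((24 : ℚ_[l]) * p)) := by
      linear_combination -e₂
    have hvC : ((b₁ : ℚ_[l]) * (b₂ : ℚ_[l]) * z₃ ^ 2).valuation
        = ((b₁ : ℚ_[l]) * z₁ ^ 2).valuation := by
      rw [hCeq, my_val_add _ _ hA0 (by rw [my_val_neg]; exact lt_of_lt_of_le hAneg h24)]
    have hz₃ : z₃ ≠ 0 := by
      intro h0
      rw [h0] at e₂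
      have hA24 : (b₁ : ℚ_[l]) * z₁ ^ 2 = (24 : ℚ_[l]) * p := by linear_combination e₂
      rw [hA24] at hAneg
      exact absurd hAneg (not_lt.mpr h24)
    have hz₃2 : z₃ ^ 2 ≠ 0 := pow_ne_zero 2 hz₃
    -- expand valuations
    have hvBx : ((b₂ : ℚ_[l]) * z₂ ^ 2).valuation
        = (padicValInt l b₂ : ℤ) + 2 * z₂.valuation := by
      rw [Padic.valuation_mul hb₂c hz₂2, hvb₂, hsq z₂ hz₂]
    have hvCx : ((b₁ : ℚ_[l]) * (b₂ : ℚ_[l]) * z₃ ^ 2).valuation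
        = (padicValInt l b₁ : ℤ) + (padicValInt l b₂ : ℤ) + 2 * z₃.valuation := by
      rw [Padic.valuation_mul (mul_ne_zero hb₁c hb₂c) hz₃2,
        Padic.valuation_mul hb₁c hb₂c, hvb₁, hvb₂, hsq z₃ hz₃]
    rw [hvBx, hvA] at hvB
    rw [hvCx, hvA] at hvC
    exact ⟨-z₁.valuation, by omega, by omega, by omega, by omega⟩
  · -- v(z₁) ≥ 0 : derive a contradiction
    exfalso
    have hAge : 0 ≤ ((b₁ : ℚ_[l]) * z₁ ^ 2).valuation := by rw [hvA]; omega
    rcases hneg with hneg1' | hneg2 | hneg3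
    · omega
    · -- v(z₂) < 0
      have hB0 : (b₂ : ℚ_[l]) * z₂ ^ 2 ≠ 0 := mul_ne_zero hb₂c hz₂2
      have hvBx : ((b₂ : ℚ_[l]) * z₂ ^ 2).valuation
          = (padicValInt l b₂ : ℤ) + 2 * z₂.valuation := by
        rw [Padic.valuation_mul hb₂c hz₂2, hvb₂, hsq z₂ hz₂]
      have hBneg : ((b₂ : ℚ_[l]) * z₂ ^ 2).valuation < 0 := by rw [hvBx]; omega
      have h15eq : (15 : ℚ_[l]) * p = (-((b₂ : ℚ_[l]) * z₂ ^ 2)) + (b₁ : ℚ_[l]) * z₁ ^ 2 := by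
        linear_combination -e₁
      have : ((15 : ℚ_[l]) * p).valuation = ((b₂ : ℚ_[l]) * z₂ ^ 2).valuation := by
        rw [h15eq, my_val_add _ _ (neg_ne_zero.mpr hB0)
          (by rw [my_val_neg]; exact lt_of_lt_of_le hBneg hAge), my_val_neg]
      omega
    · -- v(z₃) < 0
      have hz₃ : z₃ ≠ 0 := by
        intro h0; rw [h0, Padic.valuation_zero] at hneg3; exact absurd hneg3 (lt_irrefl 0)
      have hz₃2 : z₃ ^ 2 ≠ 0 := pow_ne_zero 2 hz₃
      have hC0 : (b₁ : ℚ_[l]) * (b₂ : ℚ_[l]) * z₃ ^ 2 ≠ 0 :=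
        mul_ne_zero (mul_ne_zero hb₁c hb₂c) hz₃2
      have hvCx : ((b₁ : ℚ_[l]) * (b₂ : ℚ_[l]) * z₃ ^ 2).valuation
          = (padicValInt l b₁ : ℤ) + (padicValInt l b₂ : ℤ) + 2 * z₃.valuation := by
        rw [Padic.valuation_mul (mul_ne_zero hb₁c hb₂c) hz₃2,
          Padic.valuation_mul hb₁c hb₂c, hvb₁, hvb₂, hsq z₃ hz₃]
      have h24eq : (24 : ℚ_[l]) * p
          = (-((b₁ : ℚ_[l]) * (b₂ : ℚ_[l]) * z₃ ^ 2)) + (b₁ : ℚ_[l]) * z₁ ^ 2 := by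
        linear_combination -e₂
      rcases lt_or_ge ((b₁ : ℚ_[l]) * (b₂ : ℚ_[l]) * z₃ ^ 2).valuation 0 with hCneg | hCge
      · -- v(C) < 0 : contradiction with v(24p) ≥ 0
        have : ((24 : ℚ_[l]) * p).valuation
            = ((b₁ : ℚ_[l]) * (b₂ : ℚ_[l]) * z₃ ^ 2).valuation := by
          rw [h24eq, my_val_add _ _ (neg_ne_zero.mpr hC0)
            (by rw [my_val_neg]; exact lt_of_lt_of_le hCneg hAge), my_val_neg]
        omega
      · -- v(C) = 0, forcing l ∣ b₁ (and l ∣ b₂)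
        have hCz : ((b₁ : ℚ_[l]) * (b₂ : ℚ_[l]) * z₃ ^ 2).valuation = 0 := by
          rw [hvCx] at hCge ⊢; omega
        have hpb₁1 : (padicValInt l b₁ : ℤ) = 1 := by rw [hvCx] at hCz; omega
        have hAgt : 0 < ((b₁ : ℚ_[l]) * z₁ ^ 2).valuation := by rw [hvA]; omega
        -- v(24p) = 0
        have hv24 : ((24 : ℚ_[l]) * p).valuation = 0 := by
          rw [h24eq, my_val_add _ _ (neg_ne_zero.mpr hC0)
            (by rw [my_val_neg, hCz]; exact hAgt), my_val_neg, hCz]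
        -- but l ∣ 24p, so v(24p) ≥ 1
        have hldvd : (l : ℤ) ∣ b₁ :=
          dvd_of_one_le_padicValInt hb₁0 (by exact_mod_cast hpb₁1.ge)
        have hmem := hb₁S l hlp hldvd
        simp only [Set.mem_insert_iff, Set.mem_singleton_iff] at hmem
        have hl2 : l ≠ 2 := by
          intro h; rw [h] at hlodd; exact (by decide : ¬ Odd 2) hlodd
        have hdvd24p : l ∣ 24 * p := by
          rcases hmem with h | h | h | h
          · exact absurd h hl2
          · exact ⟨8 * p, by rw [h]; ring⟩
          · exact absurd h hl5
          · exact h ▸ ⟨24, by ring⟩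
        have h24p0 : 24 * p ≠ 0 := Nat.mul_ne_zero (by norm_num) hp.pos.ne'
        have h1le : 1 ≤ padicValNat l (24 * p) := by
          have := (Nat.Prime.dvd_iff_one_le_factorization hlp h24p0).mp hdvd24p
          rwa [Nat.factorization_def _ hlp] at this
        rw [h24cast, Padic.valuation_natCast] at hv24
        omega
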